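/- Let f, g : ℝⁿ → ℝ be homogeneous polynomials of degree k ≥ 1 with no common zero except 0. Suppose that there is at most one line through the origin of ℝ² contained in U = {(f(x), g(x)) : x ∈ ℝⁿ} (i.e., at most one (a,b) with a² + b² = 1 and a + δ(a)·b > 0, where δ(0)=1 and δ(t)=0 for t≠0, such that both (a,b) ∈ U and (−a,−b) ∈ U). If f is copositive with g (g(x) ≥ 0 implies f(x) ≥ 0), then there exists ξ ≥ 0 such that f(x) − ξ·g(x) ≥ 0 for all x ∈ ℝⁿ. -/

import Mathlib

open MvPolynomial Real Set

open MvPolynomial Real Set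

lemma hs_eval_smul {n k : ℕ} {p : MvPolynomial (Fin n) ℝ} (hp : p.IsHomogeneous k)
    (c : ℝ) (x : Fin n → ℝ) :
    MvPolynomial.eval (c • x) p = c ^ k * MvPolynomial.eval x p := by
  rw [MvPolynomial.eval_eq, MvPolynomial.eval_eq, Finset.mul_sum]
  refine Finset.sum_congr rfl fun d hd => ?_
  have hw : ∑ i ∈ d.support, d i = k := by
    have := hp (MvPolynomial.mem_support_iff.mp hd)
    simpa [Finsupp.weight, Finsupp.linearCombination, Finsupp.sum] using this
  calc MvPolynomial.coeff d p * ∏ i ∈ d.support, (c • x) i ^ d i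
      = MvPolynomial.coeff d p * ((∏ i ∈ d.support, c ^ d i) * ∏ i ∈ d.support, x i ^ d i) := by
        rw [← Finset.prod_mul_distrib]; simp [mul_pow]
    _ = c ^ k * (MvPolynomial.coeff d p * ∏ i ∈ d.support, x i ^ d i) := by
        rw [Finset.prod_pow_eq_pow_sum, hw]; ring



lemma hs_canon {α : Type*} {f g : α → ℝ} (φ : ℝ)
    (h : ∃ w, f w = Real.cos φ ∧ g w = Real.sin φ)
    (h' : ∃ w, f w = -Real.cos φ ∧ g w = -Real.sin φ) :
    ∃ ε : ℝ, (ε = 1 ∨ ε = -1) ∧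
      ((ε * Real.cos φ) ^ 2 + (ε * Real.sin φ) ^ 2 = 1 ∧
       (if ε * Real.cos φ = 0 then 0 < ε * Real.sin φ else 0 < ε * Real.cos φ) ∧
       (∃ x, f x = ε * Real.cos φ ∧ g x = ε * Real.sin φ) ∧
       (∃ x, f x = -(ε * Real.cos φ) ∧ g x = -(ε * Real.sin φ))) := by
  have hpy : Real.sin φ ^ 2 + Real.cos φ ^ 2 = 1 := Real.sin_sq_add_cos_sq φ
  have ex1 : ∃ x, f x = 1 * Real.cos φ ∧ g x = 1 * Real.sin φ := by
    simpa using h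
  have ex1' : ∃ x, f x = -(1 * Real.cos φ) ∧ g x = -(1 * Real.sin φ) := by
    simpa using h'
  have ex2 : ∃ x, f x = (-1) * Real.cos φ ∧ g x = (-1) * Real.sin φ := by
    obtain ⟨w, hw1, hw2⟩ := h'; exact ⟨w, by linarith, by linarith⟩
  have ex2' : ∃ x, f x = -((-1) * Real.cos φ) ∧ g x = -((-1) * Real.sin φ) := by
    obtain ⟨w, hw1, hw2⟩ := h; exact ⟨w, by linarith, by linarith⟩
  rcases lt_trichotomy (Real.cos φ) 0 with hc | hc | hc
  · refine ⟨-1, Or.inr rfl, by nlinarith, ?_, ex2, ex2'⟩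
    rw [if_neg (by nlinarith)]; nlinarith
  · have hs : Real.sin φ = 1 ∨ Real.sin φ = -1 := by
      have : Real.sin φ ^ 2 = 1 := by nlinarith
      rcases mul_self_eq_one_iff.mp (by nlinarith : Real.sin φ * Real.sin φ = 1) with h1 | h1
      · exact Or.inl h1
      · exact Or.inr h1
    rcases hs with hs | hs
    · refine ⟨1, Or.inl rfl, by nlinarith, ?_, ex1, ex1'⟩
      rw [if_pos (by rw [hc]; ring)]; rw [hs]; norm_num
    · refine ⟨-1, Or.inr rfl, by nlinarith, ?_, ex2, ex2'⟩
      rw [if_pos (by rw [hc]; ring)]; rw [hs]; norm_num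
  · refine ⟨1, Or.inl rfl, by nlinarith, ?_, ex1, ex1'⟩
    rw [if_neg (by nlinarith)]; nlinarith

lemma hs_key {n k : ℕ} (hk : 1 ≤ k) (f g : (Fin n → ℝ) → ℝ)
    (hfc : Continuous f) (hgc : Continuous g)
    (hfs : ∀ (c : ℝ) x, f (c • x) = c ^ k * f x)
    (hgs : ∀ (c : ℝ) x, g (c • x) = c ^ k * g x)
    (hzero : ∀ x : Fin n → ℝ, f x = 0 → g x = 0 → x = 0)
    (hline : ∀ a b a' b' : ℝ,
      (a ^ 2 + b ^ 2 = 1 ∧ (if a = 0 then 0 < b else 0 < a) ∧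
        (∃ x, f x = a ∧ g x = b) ∧ (∃ x, f x = -a ∧ g x = -b)) →
      (a' ^ 2 + b' ^ 2 = 1 ∧ (if a' = 0 then 0 < b' else 0 < a') ∧
        (∃ x, f x = a' ∧ g x = b') ∧ (∃ x, f x = -a' ∧ g x = -b')) →
      a = a' ∧ b = b')
    (hcop : ∀ x : Fin n → ℝ, g x ≥ 0 → f x ≥ 0)
    (x y : Fin n → ℝ) (hx : g x < 0) (hy : 0 < g y) :
    f y * g x ≤ f x * g y := by
  by_contra hlt
  push_neg at hlt
  -- hlt : f x * g y < f y * g x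
  have hg0 : g 0 = 0 := by
    have := hgs 0 0; rwa [smul_zero, zero_pow (by omega), zero_mul] at this
  have hf0 : f 0 = 0 := by
    have := hfs 0 0; rwa [smul_zero, zero_pow (by omega), zero_mul] at this
  have hfy : 0 ≤ f y := hcop y hy.le
  have hfx : f x < 0 := by nlinarith
  rcases lt_or_ge n 2 with hn | hn
  · -- low dimensions
    interval_cases n
    · have : x = 0 := funext fun i => i.elim0
      rw [this, hg0] at hx; exact absurd hx (lt_irrefl 0)
    · have hrep : ∀ z : Fin 1 → ℝ, z = z 0 • (fun _ => (1:ℝ)) := by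
        intro z; funext i
        have hi : i = 0 := Subsingleton.elim _ _
        simp [hi]
      set o : Fin 1 → ℝ := fun _ => (1:ℝ) with ho
      have e1 : f x = (x 0) ^ k * f o := by
        conv_lhs => rw [hrep x]
        rw [hfs]
      have e2 : g x = (x 0) ^ k * g o := by
        conv_lhs => rw [hrep x]
        rw [hgs]
      have e3 : f y = (y 0) ^ k * f o := by
        conv_lhs => rw [hrep y]
        rw [hfs]
      have e4 : g y = (y 0) ^ k * g o := by
        conv_lhs => rw [hrep y]
        rw [hgs]
      rw [e1, e2, e3, e4] at hlt
      ring_nf at hlt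
      exact absurd hlt (lt_irrefl _)
  · -- n ≥ 2 : topological argument
    have hx0 : x ≠ 0 := fun h => by rw [h, hg0] at hx; exact lt_irrefl 0 hx
    have hy0 : y ≠ 0 := fun h => by rw [h, hg0] at hy; exact lt_irrefl 0 hy
    have hrank : 1 < Module.rank ℝ (Fin n → ℝ) := by
      rw [rank_fin_fun]; exact_mod_cast hn
    have hpc : IsPathConnected ({0}ᶜ : Set (Fin n → ℝ)) :=
      isPathConnected_compl_singleton_of_one_lt_rank hrank 0
    obtain ⟨γ, hγ⟩ : JoinedIn ({0}ᶜ : Set (Fin n → ℝ)) y x :=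
      hpc.joinedIn y (by simpa using hy0) x (by simpa using hx0)
    set γ' : ℝ → (Fin n → ℝ) := fun s => γ (Set.projIcc 0 1 zero_le_one s) with hγ'def
    have hγ'c : Continuous γ' := γ.continuous.comp continuous_projIcc
    have hγ'0 : ∀ s, γ' s ≠ 0 := fun s => by simpa using hγ (Set.projIcc 0 1 zero_le_one s)
    have hγ'zero : γ' 0 = y := by
      have h0 : Set.projIcc (0:ℝ) 1 zero_le_one 0 = 0 := Subtype.ext (by simp [Set.projIcc])
      show γ (Set.projIcc (0:ℝ) 1 zero_le_one 0) = y
      rw [h0]; exact γ.source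
    have hγ'one : γ' 1 = x := by
      have h1 : Set.projIcc (0:ℝ) 1 zero_le_one 1 = 1 := Subtype.ext (by simp [Set.projIcc])
      show γ (Set.projIcc (0:ℝ) 1 zero_le_one 1) = x
      rw [h1]; exact γ.target
    set W : ℝ → ℂ := fun s => (f (γ' s) : ℂ) + (g (γ' s) : ℂ) * Complex.I with hWdef
    have hWre : ∀ s, (W s).re = f (γ' s) := fun s => by simp [hWdef]
    have hWim : ∀ s, (W s).im = g (γ' s) := fun s => by simp [hWdef]
    have hW0 : ∀ s, W s ≠ 0 := by
      intro s h
      have h1 : f (γ' s) = 0 := by rw [← hWre s, h, Complex.zero_re]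
      have h2 : g (γ' s) = 0 := by rw [← hWim s, h, Complex.zero_im]
      exact hγ'0 s (hzero _ h1 h2)
    have hWc : Continuous W :=
      (Complex.continuous_ofReal.comp (hfc.comp hγ'c)).add
        ((Complex.continuous_ofReal.comp (hgc.comp hγ'c)).mul continuous_const)
    have hslit : ∀ s, W s ∈ Complex.slitPlane := by
      intro s
      rw [Complex.mem_slitPlane_iff]
      rcases eq_or_ne (g (γ' s)) 0 with h | h
      · left; rw [hWre s]
        rcases (hcop _ h.ge).lt_or_eq with h2 | h2
        · exact h2
        · exact absurd (hzero _ h2.symm h) (hγ'0 s)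
      · right; rw [hWim s]; exact h
    set θ : ℝ → ℝ := fun s => (W s).arg with hθdef
    have hθc : Continuous θ := by
      rw [continuous_iff_continuousAt]
      exact fun s => (Complex.continuousAt_arg (hslit s)).comp hWc.continuousAt
    set r : ℝ → ℝ := fun s => ‖W s‖ with hrdef
    have hrpos : ∀ s, 0 < r s := fun s => norm_pos_iff.mpr (hW0 s)
    have hcosθ : ∀ s, Real.cos (θ s) = f (γ' s) / r s := by
      intro s
      have := Complex.cos_arg (hW0 s)
      rw [hWre s] at this
      exact this
    have hsinθ : ∀ s, Real.sin (θ s) = g (γ' s) / r s := by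
      intro s
      have := Complex.sin_arg (W s)
      rw [hWim s] at this
      exact this
    have hfr : ∀ s, f (γ' s) = r s * Real.cos (θ s) := fun s => by
      rw [hcosθ s]; field_simp [(hrpos s).ne']
    have hgr : ∀ s, g (γ' s) = r s * Real.sin (θ s) := fun s => by
      rw [hsinθ s]; field_simp [(hrpos s).ne']
    have hforb : ∀ s, ¬(f (γ' s) < 0 ∧ 0 ≤ g (γ' s)) := fun s h =>
      absurd (hcop _ h.2) (not_le.mpr h.1)
    have hlow : ∀ s, -π < θ s := fun s => Complex.neg_pi_lt_arg _
    have hup : ∀ s, θ s ≤ π / 2 := by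
      intro s
      by_contra hgt
      push_neg at hgt
      have h1 : θ s ≤ π := Complex.arg_le_pi _
      have hcos : Real.cos (θ s) < 0 :=
        Real.cos_neg_of_pi_div_two_lt_of_lt hgt (by linarith [Real.pi_pos])
      have hsin : 0 ≤ Real.sin (θ s) :=
        Real.sin_nonneg_of_nonneg_of_le_pi (by linarith [Real.pi_pos]) h1
      exact hforb s ⟨by rw [hfr s]; exact mul_neg_of_pos_of_neg (hrpos s) hcos,
        by rw [hgr s]; exact mul_nonneg (hrpos s).le hsin⟩
    have hsin0 : 0 < Real.sin (θ 0) := by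
      rw [hsinθ 0, hγ'zero]; exact div_pos hy (hrpos 0)
    have hsin1 : Real.sin (θ 1) < 0 := by
      rw [hsinθ 1, hγ'one]; exact div_neg_of_neg_of_pos hx (hrpos 1)
    have hcos1 : Real.cos (θ 1) < 0 := by
      rw [hcosθ 1, hγ'one]; exact div_neg_of_neg_of_pos hfx (hrpos 1)
    have hθ0pos : 0 < θ 0 := by
      by_contra h
      push_neg at h
      rcases h.lt_or_eq with h' | h'
      · exact absurd hsin0 (not_lt.mpr (Real.sin_neg_of_neg_of_neg_pi_lt h' (hlow 0)).le)
      · rw [h'] at hsin0; simp at hsin0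
    have hθ1neg : θ 1 < -(π / 2) := by
      by_contra h
      push_neg at h
      exact absurd hcos1 (not_lt.mpr (Real.cos_nonneg_of_mem_Icc ⟨h, hup 1⟩))
    have hdet : 0 < Real.sin (θ 1 - θ 0) := by
      rw [Real.sin_sub, hsinθ 1, hcosθ 0, hcosθ 1, hsinθ 0, hγ'one, hγ'zero]
      have hre : g x / r 1 * (f y / r 0) - f x / r 1 * (g y / r 0)
          = (f y * g x - f x * g y) / (r 1 * r 0) := by ring
      rw [hre]
      exact div_pos (by linarith) (mul_pos (hrpos 1) (hrpos 0))
    have hL : θ 1 - θ 0 < -π := by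
      by_contra h
      push_neg at h
      rcases h.lt_or_eq with h' | h'
      · have h2 : θ 1 - θ 0 < 0 := by linarith [Real.pi_pos]
        exact absurd hdet (not_lt.mpr (Real.sin_neg_of_neg_of_neg_pi_lt h2 h').le)
      · rw [← h'] at hdet
        rw [Real.sin_neg, Real.sin_pi] at hdet
        simp at hdet
    have hθ10 : θ 1 ≤ θ 0 := by linarith [Real.pi_pos]
    have hIVT : ∀ φ, θ 1 ≤ φ → φ ≤ θ 0 → ∃ w, f w = Real.cos φ ∧ g w = Real.sin φ := by
      intro φ h1 h2
      have hsub : Set.uIcc (θ 1) (θ 0) ⊆ θ '' Set.uIcc 1 0 :=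
        intermediate_value_uIcc hθc.continuousOn
      obtain ⟨s, _, hs⟩ := hsub (by rw [Set.uIcc_of_le hθ10]; exact ⟨h1, h2⟩)
      have hck : (r s ^ (-(k:ℝ)⁻¹)) ^ k = (r s)⁻¹ := by
        rw [← Real.rpow_natCast (r s ^ (-(k:ℝ)⁻¹)) k, ← Real.rpow_mul (hrpos s).le]
        rw [show (-(k:ℝ)⁻¹ * k) = -1 by field_simp]
        exact Real.rpow_neg_one _
      refine ⟨(r s ^ (-(k:ℝ)⁻¹)) • γ' s, ?_, ?_⟩
      · rw [hfs, hck, ← hs, hcosθ s]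
        exact (div_eq_inv_mul _ _).symm
      · rw [hgs, hck, ← hs, hsinθ s]
        exact (div_eq_inv_mul _ _).symm
    set δ : ℝ := (θ 0 - θ 1 - π) / 2 with hδdef
    have hδpos : 0 < δ := by rw [hδdef]; linarith
    have hδlt : δ < π / 4 := by
      rw [hδdef]
      have := hup 0
      have := hlow 1
      linarith
    have A1 := hIVT (θ 1) le_rfl hθ10
    have A1' := hIVT (θ 1 + π) (by linarith [Real.pi_pos]) (by linarith)
    have A2 := hIVT (θ 1 + δ) (by linarith) (by rw [hδdef]; linarith [Real.pi_pos])
    have A2' := hIVT (θ 1 + δ + π) (by linarith [Real.pi_pos]) (by rw [hδdef]; linarith)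
    have B1 : ∃ w, f w = -Real.cos (θ 1) ∧ g w = -Real.sin (θ 1) := by
      obtain ⟨w, h1, h2⟩ := A1'
      exact ⟨w, by rw [h1, Real.cos_add_pi], by rw [h2, Real.sin_add_pi]⟩
    have B2 : ∃ w, f w = -Real.cos (θ 1 + δ) ∧ g w = -Real.sin (θ 1 + δ) := by
      obtain ⟨w, h1, h2⟩ := A2'
      refine ⟨w, ?_, ?_⟩
      · rw [h1, show θ 1 + δ + π = (θ 1 + δ) + π by ring, Real.cos_add_pi]
      · rw [h2, show θ 1 + δ + π = (θ 1 + δ) + π by ring, Real.sin_add_pi]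
    obtain ⟨ε₁, hε₁, H1⟩ := hs_canon (θ 1) A1 B1
    obtain ⟨ε₂, hε₂, H2⟩ := hs_canon (θ 1 + δ) A2 B2
    obtain ⟨ha, hb⟩ := hline _ _ _ _ H1 H2
    have hε₁sq : ε₁ * ε₁ = 1 := by rcases hε₁ with h | h <;> rw [h] <;> norm_num
    have hc : Real.cos (θ 1) = ε₁ * (ε₂ * Real.cos (θ 1 + δ)) := by
      rw [← ha, ← mul_assoc, hε₁sq, one_mul]
    have hs' : Real.sin (θ 1) = ε₁ * (ε₂ * Real.sin (θ 1 + δ)) := by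
      rw [← hb, ← mul_assoc, hε₁sq, one_mul]
    have hzero' : Real.sin (θ 1 - (θ 1 + δ)) = 0 := by
      rw [Real.sin_sub, hc, hs']; ring
    rw [show θ 1 - (θ 1 + δ) = -δ by ring, Real.sin_neg] at hzero'
    have hsd : 0 < Real.sin δ :=
      Real.sin_pos_of_pos_of_lt_pi hδpos (by linarith [Real.pi_pos])
    linarith

theorem hs_lemma (n : ℕ) (k : ℕ) (hk : 1 ≤ k)
    (p q : MvPolynomial (Fin n) ℝ)
    (hp : p.IsHomogeneous k) (hq : q.IsHomogeneous k)
    (f g : (Fin n → ℝ) → ℝ)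
    (hf : ∀ x, f x = MvPolynomial.eval x p)
    (hg : ∀ x, g x = MvPolynomial.eval x q)
    (hzero : ∀ x : Fin n → ℝ, f x = 0 → g x = 0 → x = 0)
    (hline : ∀ a b a' b' : ℝ,
      (a ^ 2 + b ^ 2 = 1 ∧ (if a = 0 then 0 < b else 0 < a) ∧
        (∃ x, f x = a ∧ g x = b) ∧ (∃ x, f x = -a ∧ g x = -b)) →
      (a' ^ 2 + b' ^ 2 = 1 ∧ (if a' = 0 then 0 < b' else 0 < a') ∧
        (∃ x, f x = a' ∧ g x = b') ∧ (∃ x, f x = -a' ∧ g x = -b')) →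
      a = a' ∧ b = b')
    (hcop : ∀ x : Fin n → ℝ, g x ≥ 0 → f x ≥ 0) :
    ∃ ξ : ℝ, 0 ≤ ξ ∧ ∀ x : Fin n → ℝ, f x - ξ * g x ≥ 0 := by
  have hfs : ∀ (c : ℝ) x, f (c • x) = c ^ k * f x := fun c x => by
    rw [hf, hf, hs_eval_smul hp]
  have hgs : ∀ (c : ℝ) x, g (c • x) = c ^ k * g x := fun c x => by
    rw [hg, hg, hs_eval_smul hq]
  have hfc : Continuous f := by
    have : f = fun x => MvPolynomial.eval x p := funext hf
    rw [this]; exact MvPolynomial.continuous_eval p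
  have hgc : Continuous g := by
    have : g = fun x => MvPolynomial.eval x q := funext hg
    rw [this]; exact MvPolynomial.continuous_eval q
  have hf0 : f 0 = 0 := by
    have := hfs 0 0
    rwa [smul_zero, zero_pow (by omega : k ≠ 0), zero_mul] at this
  have hg0 : g 0 = 0 := by
    have := hgs 0 0
    rwa [smul_zero, zero_pow (by omega : k ≠ 0), zero_mul] at this
  have key : ∀ x y, g x < 0 → 0 < g y → f y * g x ≤ f x * g y :=
    fun x y => hs_key hk f g hfc hgc hfs hgs hzero hline hcop x y
  by_cases hC : ∃ y, 0 < g y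
  · obtain ⟨y₀, hy₀⟩ := hC
    set S : Set ℝ := insert 0 {t | ∃ x, g x < 0 ∧ f x / g x = t} with hS
    have hSne : S.Nonempty := ⟨0, Set.mem_insert 0 _⟩
    have hub : ∀ y, 0 < g y → f y / g y ∈ upperBounds S := by
      intro y hy t ht
      rcases Set.mem_insert_iff.mp ht with h | ⟨x, hxneg, hx⟩
      · rw [h]; exact div_nonneg (hcop y hy.le) hy.le
      · rw [← hx, div_le_iff_of_neg hxneg]
        have h2 : f y / g y * g x = f y * g x / g y := by ring
        rw [h2, div_le_iff₀ hy]
        exact key x y hxneg hy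
    have hbdd : BddAbove S := ⟨_, hub y₀ hy₀⟩
    refine ⟨sSup S, le_csSup hbdd (Set.mem_insert 0 _), ?_⟩
    intro x
    rcases lt_trichotomy (g x) 0 with h | h | h
    · have hmem : f x / g x ∈ S := Set.mem_insert_of_mem _ ⟨x, h, rfl⟩
      have h3 := le_csSup hbdd hmem
      rw [div_le_iff_of_neg h] at h3
      linarith
    · rw [h]; simpa using hcop x h.ge
    · have hle : sSup S ≤ f x / g x := csSup_le hSne (hub x h)
      rw [le_div_iff₀ h] at hle
      linarith
  · push_neg at hC
    set A : Set (Fin n → ℝ) := Metric.sphere 0 1 ∩ {x | f x ≤ 0} with hA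
    have hAc : IsCompact A :=
      (isCompact_sphere 0 1).inter_right (isClosed_le hfc continuous_const)
    have hgA : ∀ x ∈ A, g x < 0 := by
      rintro x ⟨hx1, hx2⟩
      rcases (hC x).lt_or_eq with h | h
      · exact h
      · have hfeq : f x = 0 := le_antisymm hx2 (hcop x h.ge)
        have h0 := hzero x hfeq h
        rw [h0] at hx1
        simp at hx1
    have hsph : ∀ C : ℝ, 0 ≤ C → (∀ u ∈ Metric.sphere (0 : Fin n → ℝ) 1, 0 ≤ f u - C * g u) →
        ∀ x, f x - C * g x ≥ 0 := by
      intro C hC0 hall x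
      rcases eq_or_ne x 0 with h | h
      · rw [h, hf0, hg0]; simp
      · have hnx : 0 < ‖x‖ := norm_pos_iff.mpr h
        have hu : (‖x‖⁻¹ • x) ∈ Metric.sphere (0 : Fin n → ℝ) 1 := by
          rw [mem_sphere_zero_iff_norm, norm_smul, norm_inv, norm_norm]
          exact inv_mul_cancel₀ hnx.ne'
        have hx' : f x = ‖x‖ ^ k * f (‖x‖⁻¹ • x) := by
          conv_lhs => rw [← smul_inv_smul₀ hnx.ne' x]
          rw [hfs]
        have hgx' : g x = ‖x‖ ^ k * g (‖x‖⁻¹ • x) := by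
          conv_lhs => rw [← smul_inv_smul₀ hnx.ne' x]
          rw [hgs]
        have heq : f x - C * g x = ‖x‖ ^ k * (f (‖x‖⁻¹ • x) - C * g (‖x‖⁻¹ • x)) := by
          rw [hx', hgx']; ring
        rw [ge_iff_le, heq]
        exact mul_nonneg (pow_nonneg (norm_nonneg x) k) (hall _ hu)
    rcases Set.eq_empty_or_nonempty A with hAe | hAne
    · refine ⟨0, le_rfl, hsph 0 le_rfl ?_⟩
      intro u hu
      have hnm : ¬ f u ≤ 0 := fun hle => (Set.eq_empty_iff_forall_notMem.mp hAe u) ⟨hu, hle⟩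
      simp only [zero_mul, sub_zero]
      linarith [not_le.mp hnm]
    · obtain ⟨xm, hxmA, hxm⟩ := hAc.exists_isMinOn hAne hfc.continuousOn
      obtain ⟨xg, hxgA, hxg⟩ := hAc.exists_isMaxOn hAne hgc.continuousOn
      have hGneg : g xg < 0 := hgA xg hxgA
      have hmle : f xm ≤ 0 := hxmA.2
      have hC0 : 0 ≤ f xm / g xg := div_nonneg_of_nonpos hmle hGneg.le
      refine ⟨f xm / g xg, hC0, hsph _ hC0 ?_⟩
      intro u hu
      rcases le_or_gt (f u) 0 with hfu | hfu
      · have huA : u ∈ A := ⟨hu, hfu⟩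
        have h1 : f xm ≤ f u := hxm huA
        have h2 : g u ≤ g xg := hxg huA
        have h3 : f xm / g xg * g u ≤ f xm / g xg * g xg := mul_le_mul_of_nonneg_left h2 hC0
        have h4 : f xm / g xg * g xg = f xm := div_mul_cancel₀ (f xm) hGneg.ne
        linarith
      · have hgu : g u ≤ 0 := hC u
        nlinarith [mul_nonneg hC0 (neg_nonneg.mpr hgu)]
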